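/- In the setting of the previous theorem (oblivious agent on the path v₁,…,vₙ with per-node visit sequence a : ℕ → Fin 2, started at vₙ), there exists a port labeling such that if the agent ever reaches v₁, the agent traverses the arc vₙ → v_{n−1} at least n−1 times before its first visit to v₁. -/

import Mathlib

/-- One step of the oblivious agent on the path `v₁, …, vₙ` (vertices `1, …, n`).
The state is `(current vertex, visit counts)`.  At an internal node `v` the agent,
on its `k`-th visit, exits via port `a k`, which the labeling `L` maps to a
physical neighbor; at the endpoints it moves to the unique neighbor.  Visit counts
are updated on departure. -/
def pathStep (n : ℕ) (a : ℕ → Fin 2) (L : ℕ → Fin 2 → ℕ)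
    (s : ℕ × (ℕ → ℕ)) : ℕ × (ℕ → ℕ) :=
  let v := s.1
  let c := s.2
  let v' := if v = 1 then 2 else if v = n then n - 1 else L v (a (c v + 1))
  (v', Function.update c v (c v + 1))

/-- The walk of the oblivious agent on the path, started at vertex `n` (= `vₙ`). -/
def pathWalk (n : ℕ) (a : ℕ → Fin 2) (L : ℕ → Fin 2 → ℕ) : ℕ → ℕ × (ℕ → ℕ)
  | 0 => (n, fun _ => 0)
  | t + 1 => pathStep n a L (pathWalk n a L t)

/-- A valid port labeling: at every internal node the two ports are assigned
bijectively to the two physical neighbors. -/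
def ValidLabeling (n : ℕ) (L : ℕ → Fin 2 → ℕ) : Prop :=
  ∀ v, 1 < v → v < n →
    (L v 0 = v - 1 ∧ L v 1 = v + 1) ∨ (L v 0 = v + 1 ∧ L v 1 = v - 1)

/-! ### auxiliary counting definitions -/

/-- number of occurrences of bit `b` among `a 1, …, a m`. -/
def cntP (a : ℕ → Fin 2) (b : Fin 2) (m : ℕ) : ℕ :=
  ((Finset.Icc 1 m).filter (fun k => a k = b)).card

/-- a minority bit of `a 1, …, a (2j-1)`. -/
def minb (a : ℕ → Fin 2) (j : ℕ) : Fin 2 :=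
  if cntP a 0 (2 * j - 1) ≤ j - 1 then 0 else 1

noncomputable def Jf (a : ℕ → Fin 2) : ℕ → ℕ
  | 0 => 1
  | i + 1 =>
      sInf {m | a m = minb a (Jf a i) ∧ cntP a (minb a (Jf a i)) m = Jf a i}
        - Jf a i + 1

/-- the orientation bit at node `v` (ports labeled so that port `oB a v` goes down). -/
noncomputable def oB (a : ℕ → Fin 2) (v : ℕ) : Fin 2 := minb a (Jf a (v - 2))

noncomputable def Lab (a : ℕ → Fin 2) (v : ℕ) (p : Fin 2) : ℕ :=
  if p = oB a v then v - 1 else v + 1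

/-- down-move count: moves `v → v-1` before time `t`. -/
noncomputable def dnc (n : ℕ) (a : ℕ → Fin 2) (v t : ℕ) : ℕ :=
  ((Finset.range t).filter (fun s =>
    (pathWalk n a (Lab a) s).1 = v ∧ (pathWalk n a (Lab a) (s + 1)).1 = v - 1)).card

/-- up-move count: moves `v → v+1` before time `t`. -/
noncomputable def upc (n : ℕ) (a : ℕ → Fin 2) (v t : ℕ) : ℕ :=
  ((Finset.range t).filter (fun s =>
    (pathWalk n a (Lab a) s).1 = v ∧ (pathWalk n a (Lab a) (s + 1)).1 = v + 1)).card

/-! ### basic counting lemmas -/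

lemma filt_succ (p : ℕ → Prop) [DecidablePred p] (t : ℕ) :
    ((Finset.range (t + 1)).filter p).card =
      ((Finset.range t).filter p).card + if p t then 1 else 0 := by
  rw [Finset.range_add_one, Finset.filter_insert]
  split
  · rw [Finset.card_insert_of_notMem (by simp)]
  · simp

lemma cntP_zero (a : ℕ → Fin 2) (b : Fin 2) : cntP a b 0 = 0 := by
  simp [cntP]

lemma cntP_succ (a : ℕ → Fin 2) (b : Fin 2) (m : ℕ) :
    cntP a b (m + 1) = cntP a b m + if a (m + 1) = b then 1 else 0 := by
  unfold cntP
  rw [show Finset.Icc 1 (m + 1) = insert (m + 1) (Finset.Icc 1 m) by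
      ext x; simp [Finset.mem_Icc]; omega, Finset.filter_insert]
  split
  · rw [Finset.card_insert_of_notMem (by simp)]
  · simp

lemma cntP_le (a : ℕ → Fin 2) (b : Fin 2) (m : ℕ) : cntP a b m ≤ m := by
  calc cntP a b m ≤ (Finset.Icc 1 m).card := Finset.card_filter_le _ _
  _ = m := by rw [Nat.card_Icc]; omega

lemma cntP_mono (a : ℕ → Fin 2) (b : Fin 2) {m m' : ℕ} (h : m ≤ m') :
    cntP a b m ≤ cntP a b m' := by
  apply Finset.card_le_card
  exact Finset.filter_subset_filter _ (Finset.Icc_subset_Icc_right h)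

lemma cntP_lt (a : ℕ → Fin 2) (b : Fin 2) {m m' : ℕ} (h1 : m' < m) (h2 : 1 ≤ m)
    (hb : a m = b) : cntP a b m' < cntP a b m := by
  have : insert m ((Finset.Icc 1 m').filter (fun k => a k = b)) ⊆
      (Finset.Icc 1 m).filter (fun k => a k = b) := by
    intro x hx
    rcases Finset.mem_insert.1 hx with rfl | hx
    · simp [Finset.mem_filter, Finset.mem_Icc, h2, hb]
    · simp only [Finset.mem_filter, Finset.mem_Icc] at hx ⊢
      exact ⟨⟨hx.1.1, hx.1.2.trans (by omega)⟩, hx.2⟩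
  have hcard := Finset.card_le_card this
  rw [Finset.card_insert_of_notMem (by simp [Finset.mem_Icc]; omega)] at hcard
  unfold cntP
  omega

lemma cntP_total (a : ℕ → Fin 2) (m : ℕ) : cntP a 0 m + cntP a 1 m = m := by
  unfold cntP
  have h0 : ∀ b : Fin 2, ¬ b = 0 ↔ b = 1 := by decide
  rw [show (Finset.filter (fun k => a k = 1) (Finset.Icc 1 m)) =
      (Finset.filter (fun k => ¬ a k = 0) (Finset.Icc 1 m)) from
    Finset.filter_congr (fun k _ => by simp [h0])]
  rw [Finset.card_filter_add_card_filter_not]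
  rw [Nat.card_Icc]; omega

lemma minb_spec (a : ℕ → Fin 2) {j : ℕ} (hj : 1 ≤ j) :
    cntP a (minb a j) (2 * j - 1) ≤ j - 1 := by
  unfold minb
  split_ifs with h
  · exact h
  · have := cntP_total a (2 * j - 1)
    omega

/-! ### walk lemmas -/

section Walk

variable {n : ℕ} (a : ℕ → Fin 2)

local notation "W" => pathWalk n a (Lab a)

lemma lab_mem (v : ℕ) (b : Fin 2) : Lab a v b = v - 1 ∨ Lab a v b = v + 1 := by
  unfold Lab; split <;> simp

lemma lab_down_iff {v : ℕ} (hv : 2 ≤ v) (b : Fin 2) :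
    Lab a v b = v - 1 ↔ b = oB a v := by
  unfold Lab
  split_ifs with h
  · simp [h]
  · simp [h]; omega

variable (hn : 2 ≤ n)
include hn

lemma walk_mem (t : ℕ) : 1 ≤ (W t).1 ∧ (W t).1 ≤ n := by
  induction t with
  | zero => constructor <;> simp [pathWalk] <;> omega
  | succ t ih =>
    have key : (W (t + 1)).1 = if (W t).1 = 1 then 2 else if (W t).1 = n then n - 1
        else Lab a (W t).1 (a ((W t).2 (W t).1 + 1)) := rfl
    split_ifs at key
    · omega
    · omega
    · rcases lab_mem a (W t).1 (a ((W t).2 (W t).1 + 1)) with h | h <;> rw [h] at key <;> omega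

lemma walk_step (t : ℕ) :
    ((W t).1 = 1 ∧ (W (t + 1)).1 = 2) ∨
    ((W t).1 = n ∧ (W (t + 1)).1 = n - 1) ∨
    (1 < (W t).1 ∧ (W t).1 < n ∧
      (W (t + 1)).1 = Lab a (W t).1 (a ((W t).2 (W t).1 + 1))) := by
  have hm := walk_mem a hn t
  have key : (W (t + 1)).1 = if (W t).1 = 1 then 2 else if (W t).1 = n then n - 1
      else Lab a (W t).1 (a ((W t).2 (W t).1 + 1)) := rfl
  split_ifs at key with h1 h2
  · left; exact ⟨h1, key⟩
  · right; left; exact ⟨h2, key⟩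
  · right; right; exact ⟨by omega, by omega, key⟩

lemma step_bnd (t : ℕ) :
    (W t).1 - 1 ≤ (W (t + 1)).1 ∧ (W (t + 1)).1 ≤ (W t).1 + 1 := by
  rcases walk_step a hn t with ⟨h1, h2⟩ | ⟨h1, h2⟩ | ⟨h1, h2, h3⟩
  · omega
  · omega
  · rcases lab_mem a (W t).1 (a ((W t).2 (W t).1 + 1)) with h | h <;> rw [h] at h3 <;> omega

lemma counter_succ_self (t : ℕ) :
    (W (t + 1)).2 ((W t).1) = (W t).2 ((W t).1) + 1 := by
  show (pathStep n a (Lab a) (W t)).2 _ = _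
  unfold pathStep
  simp

lemma counter_succ_other {v : ℕ} (t : ℕ) (hv : v ≠ (W t).1) :
    (W (t + 1)).2 v = (W t).2 v := by
  show (pathStep n a (Lab a) (W t)).2 _ = _
  unfold pathStep
  simp [Function.update_of_ne hv]

lemma counter_const {v : ℕ} {r₁ r₂ : ℕ} (h12 : r₁ ≤ r₂)
    (h : ∀ r, r₁ ≤ r → r < r₂ → (W r).1 ≠ v) : (W r₂).2 v = (W r₁).2 v := by
  induction r₂, h12 using Nat.le_induction with
  | base => rfl
  | succ r₂ h12 ih =>
    rw [counter_succ_other a hn r₂ (fun he => h r₂ h12 (by omega) he.symm)]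
    exact ih (fun r hr1 hr2 => h r hr1 (by omega))

lemma dnc_succ (v t : ℕ) :
    dnc n a v (t + 1) = dnc n a v t +
      if (W t).1 = v ∧ (W (t + 1)).1 = v - 1 then 1 else 0 :=
  filt_succ _ t

lemma upc_succ (v t : ℕ) :
    upc n a v (t + 1) = upc n a v t +
      if (W t).1 = v ∧ (W (t + 1)).1 = v + 1 then 1 else 0 :=
  filt_succ _ t

/-- crossing invariant for the edge `(v-1, v)`. -/
lemma cross {v : ℕ} (hv2 : 2 ≤ v) (hvn : v ≤ n) (t : ℕ) :
    dnc n a v t = upc n a (v - 1) t + if (W t).1 < v then 1 else 0 := by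
  induction t with
  | zero =>
    have h0 : (W 0).1 = n := rfl
    simp only [dnc, upc, Finset.range_zero, Finset.filter_empty, Finset.card_empty, h0]
    split_ifs with h <;> omega
  | succ t ih =>
    rw [dnc_succ a hn, upc_succ a hn]
    have hb := step_bnd a hn t
    have hm := walk_mem a hn t
    have hm' := walk_mem a hn (t + 1)
    have hstep : (W (t + 1)).1 = (W t).1 - 1 ∨ (W (t + 1)).1 = (W t).1 + 1 := by
      rcases walk_step a hn t with ⟨h1, h2⟩ | ⟨h1, h2⟩ | ⟨h1, h2, h3⟩
      · right; omega
      · left; omega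
      · rcases lab_mem a (W t).1 (a ((W t).2 (W t).1 + 1)) with h | h <;>
          rw [h] at h3 <;> [left; right] <;> omega
    split_ifs at ih ⊢ <;> omega

/-- each departure is up or down. -/
lemma updown {v : ℕ} (hv2 : 2 ≤ v) (hvn : v < n) (t : ℕ) :
    dnc n a v t + upc n a v t = (W t).2 v := by
  induction t with
  | zero =>
    simp only [dnc, upc, Finset.range_zero, Finset.filter_empty, Finset.card_empty]
    rfl
  | succ t ih =>
    rw [dnc_succ a hn, upc_succ a hn]
    by_cases hv : (W t).1 = v
    · have hc : (W (t + 1)).2 v = (W t).2 v + 1 := by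
        rw [← hv]; exact counter_succ_self a hn t
      have h3 : (W (t + 1)).1 = Lab a (W t).1 (a ((W t).2 (W t).1 + 1)) := by
        rcases walk_step a hn t with ⟨h1, h2⟩ | ⟨h1, h2⟩ | ⟨h1, h2, h3⟩
        · omega
        · omega
        · exact h3
      rcases lab_mem a (W t).1 (a ((W t).2 (W t).1 + 1)) with h | h <;>
        rw [h] at h3 <;> rw [hc] <;> split_ifs <;> omega
    · have hc : (W (t + 1)).2 v = (W t).2 v := counter_succ_other a hn t (fun he => hv he.symm)
      rw [hc]; split_ifs <;> omega

/-- departures from an internal node follow the sequence `a` and the orientation bit. -/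
lemma downcount {v : ℕ} (hv2 : 2 ≤ v) (hvn : v < n) (t : ℕ) :
    dnc n a v t = cntP a (oB a v) ((W t).2 v) := by
  induction t with
  | zero =>
    simp only [dnc, Finset.range_zero, Finset.filter_empty, Finset.card_empty]
    exact (cntP_zero a _).symm
  | succ t ih =>
    rw [dnc_succ a hn]
    by_cases hv : (W t).1 = v
    · have hc : (W (t + 1)).2 v = (W t).2 v + 1 := by
        rw [← hv]; exact counter_succ_self a hn t
      have h3 : (W (t + 1)).1 = Lab a v (a ((W t).2 v + 1)) := by
        rcases walk_step a hn t with ⟨h1, h2⟩ | ⟨h1, h2⟩ | ⟨h1, h2, h3⟩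
        · omega
        · omega
        · rw [h3, hv]
      rw [hc, cntP_succ]
      by_cases hab : a ((W t).2 v + 1) = oB a v
      · have hdown : (W (t + 1)).1 = v - 1 := by
          rw [h3, lab_down_iff a hv2]; exact hab
        rw [if_pos ⟨hv, hdown⟩, if_pos hab, ih]
      · have hup : (W (t + 1)).1 = v + 1 := by
          rcases lab_mem a v (a ((W t).2 v + 1)) with h | h
          · exact absurd ((lab_down_iff a hv2 _).1 h) hab
          · rw [h3, h]
        rw [if_neg (by omega), if_neg hab, ih]
    · have hc : (W (t + 1)).2 v = (W t).2 v := counter_succ_other a hn t (fun he => hv he.symm)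
      rw [hc, if_neg (by tauto), ih]
      omega

/-- discrete intermediate value property. -/
lemma exists_hit (v : ℕ) :
    ∀ k s t : ℕ, t - s ≤ k → s ≤ t → v ≤ (W s).1 → (W t).1 ≤ v →
      ∃ r, s ≤ r ∧ r ≤ t ∧ (W r).1 = v := by
  intro k
  induction k with
  | zero =>
    intro s t h1 h2 h3 h4
    have hts : t = s := by omega
    rw [hts] at h4
    exact ⟨s, le_refl s, by omega, by omega⟩
  | succ k ih =>
    intro s t h1 h2 h3 h4
    by_cases hs : (W s).1 ≤ v
    · exact ⟨s, le_refl s, h2, by omega⟩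
    · have hst : s < t := by
        rcases Nat.lt_or_ge s t with h | h
        · exact h
        · have hts : t = s := by omega
          rw [hts] at h4
          omega
      have hb := step_bnd a hn s
      obtain ⟨r, hr1, hr2, hr3⟩ := ih (s + 1) t (by omega) (by omega) (by omega) h4
      exact ⟨r, by omega, hr2, hr3⟩

end Walk

/-- For any oblivious agent on the path `v₁, …, vₙ` started at `vₙ`, there is a
port labeling such that if the agent first reaches `v₁` at time `T`, then before
time `T` it has traversed the arc `vₙ → v_{n-1}` at least `n - 1` times. -/
theorem path_lower_bound_endpoint_arc (n : ℕ) (hn : 2 ≤ n) (a : ℕ → Fin 2) :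
    ∃ L : ℕ → Fin 2 → ℕ, ValidLabeling n L ∧
      ∀ T, (pathWalk n a L T).1 = 1 → (∀ t < T, (pathWalk n a L t).1 ≠ 1) →
        n - 1 ≤ ((Finset.range T).filter (fun t =>
          (pathWalk n a L t).1 = n ∧ (pathWalk n a L (t + 1)).1 = n - 1)).card := by
  refine ⟨Lab a, ?_, ?_⟩
  · intro v hv1 hvn
    have hb : ∀ b : Fin 2, b = 0 ∨ b = 1 := by decide
    rcases hb (oB a v) with h | h
    · left
      constructor <;> simp [Lab, h, Fin.ext_iff]
    · right
      constructor <;> simp [Lab, h, Fin.ext_iff]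
  · intro T hT hpre
    show n - 1 ≤ dnc n a n T
    have hu1 : upc n a 1 T = 0 := by
      unfold upc
      rw [Finset.card_eq_zero, Finset.filter_eq_empty_iff]
      intro s hs
      rw [Finset.mem_range] at hs
      intro hcon
      exact (hpre s hs) hcon.1
    have hbase : dnc n a 2 T = 1 := by
      have h := cross a hn (le_refl 2) hn T
      rw [hT] at h
      simpa [hu1] using h
    have master : ∀ i, 2 + i ≤ n →
        dnc n a (2 + i) T = Jf a i ∧ i + 1 ≤ Jf a i := by
      intro i
      induction i with
      | zero =>
        intro _
        exact ⟨hbase, le_refl 1⟩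
      | succ i ih =>
        intro hle
        obtain ⟨hd, hj⟩ := ih (by omega)
        set v := 2 + i with hv
        set j := Jf a i with hjdef
        have hv2 : 2 ≤ v := by omega
        have hvn : v < n := by omega
        set m := (pathWalk n a (Lab a) T).2 v with hm
        have hcnt : cntP a (oB a v) m = j := by
          rw [← downcount a hn hv2 hvn T, hd]
        have hj1 : 1 ≤ j := by omega
        have hm1 : 1 ≤ m := by
          by_contra h
          have h0 : m = 0 := by omega
          rw [h0, cntP_zero] at hcnt
          omega
        -- the last visit to `v` before `T`
        have hSne : ∃ s, s < T ∧ (pathWalk n a (Lab a) s).1 = v := by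
          by_contra h
          push_neg at h
          have h0 := counter_const a hn (Nat.zero_le T)
            (fun r _ hr => h r hr)
          have : (pathWalk n a (Lab a) 0).2 v = 0 := rfl
          rw [← hm] at h0  -- fix below if needed
          omega
        obtain ⟨s0, hs0⟩ := hSne
        have hSne' : ((Finset.range T).filter
            (fun s => (pathWalk n a (Lab a) s).1 = v)).Nonempty :=
          ⟨s0, by simp [Finset.mem_filter, Finset.mem_range, hs0.1, hs0.2]⟩
        set s := ((Finset.range T).filter
            (fun s => (pathWalk n a (Lab a) s).1 = v)).max' hSne' with hsdef
        have hsmem := Finset.max'_mem _ hSne'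
        rw [← hsdef] at hsmem
        rw [Finset.mem_filter, Finset.mem_range] at hsmem
        obtain ⟨hsT, hsv⟩ := hsmem
        have hnv : ∀ r, s + 1 ≤ r → r < T → (pathWalk n a (Lab a) r).1 ≠ v := by
          intro r h1 h2 hcon
          have hrS : r ∈ (Finset.range T).filter
              (fun s => (pathWalk n a (Lab a) s).1 = v) := by
            rw [Finset.mem_filter, Finset.mem_range]; exact ⟨h2, hcon⟩
          have := Finset.le_max' _ r hrS
          rw [← hsdef] at this
          omega
        have hc1 : (pathWalk n a (Lab a) (s + 1)).2 v
            = (pathWalk n a (Lab a) s).2 v + 1 := by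
          rw [← hsv]; exact counter_succ_self a hn s
        have hcT : (pathWalk n a (Lab a) T).2 v
            = (pathWalk n a (Lab a) (s + 1)).2 v :=
          counter_const a hn (by omega) hnv
        have hmm : m = (pathWalk n a (Lab a) s).2 v + 1 := by
          rw [hm, hcT, hc1]
        have h3 : (pathWalk n a (Lab a) (s + 1)).1 = Lab a v (a m) := by
          rcases walk_step a hn s with ⟨h1, _⟩ | ⟨h1, _⟩ | ⟨_, _, h3⟩
          · omega
          · omega
          · rw [h3, hsv, ← hmm]
        have hdown : (pathWalk n a (Lab a) (s + 1)).1 = v - 1 := by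
          by_contra hcon
          have hup : (pathWalk n a (Lab a) (s + 1)).1 = v + 1 := by
            rcases lab_mem a v (a m) with h | h
            · exact absurd (h3.trans h) hcon
            · exact h3.trans h
          obtain ⟨r, hr1, hr2, hr3⟩ := exists_hit a hn v (T - (s + 1)) (s + 1) T
            (le_refl _) (by omega) (by rw [hup]; omega) (by rw [hT]; omega)
          have hrT : r < T := by
            have : r ≠ T := fun he => by rw [he, hT] at hr3; omega
            omega
          exact hnv r hr1 hrT hr3
        have ham : a m = oB a v := (lab_down_iff a hv2 (a m)).1 (h3.symm.trans hdown)
        have hob : oB a v = minb a j := by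
          have hvi : v - 2 = i := by omega
          rw [oB, hvi, ← hjdef]
        have hm2j : 2 * j ≤ m := by
          by_contra h
          have h' : m ≤ 2 * j - 1 := by omega
          have hmono := cntP_mono a (oB a v) h'
          have hms := minb_spec a hj1
          rw [← hob] at hms
          omega
        have hmS : a m = minb a j ∧ cntP a (minb a j) m = j := by
          rw [← hob]; exact ⟨ham, hcnt⟩
        have hmin : ∀ m', (a m' = minb a j ∧ cntP a (minb a j) m' = j) → m ≤ m' := by
          intro m' hm'
          by_contra hlt
          have hstrict := cntP_lt a (minb a j) (show m' < m by omega) hm1 (hob ▸ ham)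
          rw [hm'.2, ← hob, hcnt] at hstrict
          omega
        have hinf : sInf {m' | a m' = minb a j ∧ cntP a (minb a j) m' = j} = m := by
          apply le_antisymm
          · exact Nat.sInf_le hmS
          · have hne : {m' | a m' = minb a j ∧ cntP a (minb a j) m' = j}.Nonempty :=
              ⟨m, hmS⟩
            exact hmin _ (Nat.sInf_mem hne)
        have hJsucc : Jf a (i + 1) = m - j + 1 := by
          rw [Jf, ← hjdef, hinf]
        have hup2 : dnc n a v T + upc n a v T = m := by
          rw [hm]; exact updown a hn hv2 hvn T
        have hcross : dnc n a (v + 1) T = upc n a v T + 1 := by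
          have h := cross a hn (show 2 ≤ v + 1 by omega) (show v + 1 ≤ n by omega) T
          rw [hT, if_pos (by omega)] at h
          simpa using h
        have hgoal : 2 + (i + 1) = v + 1 := by omega
        rw [hgoal]
        constructor
        · rw [hJsucc, hcross]; omega
        · omega
    obtain ⟨hfin, hge⟩ := master (n - 2) (by omega)
    have h2n : 2 + (n - 2) = n := by omega
    rw [h2n] at hfin
    omega
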